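/- Let λ>0, μ>0 and let z, z':[0,∞)→ℂ be measurable with ‖z‖_λ < ∞, ‖z'‖_λ < ∞, and suppose 2μ ≤ λ − μ‖z‖_λ. Let Θ and Θ' be asymptotic characteristics for z and z' respectively with ‖Θ(t,ϑ,ω) − ϑ − ωt‖_λ < ∞ and ‖Θ'(t,ϑ,ω) − ϑ − ωt‖_λ < ∞, let f_∞ be a probability density on the cylinder, and define w(t) := ∫_{[0,2π)×ℝ} e^{iΘ(t,ϑ,ω)} f_∞(ϑ,ω) dϑ dω and w'(t) := ∫_{[0,2π)×ℝ} e^{iΘ'(t,ϑ,ω)} f_∞(ϑ,ω) dϑ dω. Then ‖w − w'‖_λ ≤ (1/2)‖z − z'‖_λ. -/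

import Mathlib

open MeasureTheory

noncomputable section

/-- Weighted sup-norm `sup_{t ≥ 0} |z t| e^{l t}` for `z : ℝ → ℂ`. -/
def expNormZ (l : ℝ) (z : ℝ → ℂ) : ℝ :=
  ⨆ t : {t : ℝ // 0 ≤ t}, ‖z t.1‖ * Real.exp (l * t.1)

/-- Finiteness of the weighted sup-norm for `z : ℝ → ℂ`. -/
def ExpBddZ (l : ℝ) (z : ℝ → ℂ) : Prop :=
  BddAbove (Set.range fun t : {t : ℝ // 0 ≤ t} => ‖z t.1‖ * Real.exp (l * t.1))

/-- Weighted sup-norm `sup_{t ≥ 0, ϑ, ω} |h t ϑ ω| e^{l t}`. -/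
def expNormH (l : ℝ) (h : ℝ → ℝ → ℝ → ℂ) : ℝ :=
  ⨆ p : {t : ℝ // 0 ≤ t} × ℝ × ℝ, ‖h p.1.1 p.2.1 p.2.2‖ * Real.exp (l * p.1.1)

/-- Finiteness of the weighted sup-norm for `h`. -/
def ExpBddH (l : ℝ) (h : ℝ → ℝ → ℝ → ℂ) : Prop :=
  BddAbove (Set.range fun p : {t : ℝ // 0 ≤ t} × ℝ × ℝ =>
    ‖h p.1.1 p.2.1 p.2.2‖ * Real.exp (l * p.1.1))

-- ### auxiliary lemmas

lemma expNormZ_nonneg {l : ℝ} {z : ℝ → ℂ} (hb : ExpBddZ l z) : 0 ≤ expNormZ l z := by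
  have h := le_ciSup hb (⟨0, le_refl 0⟩ : {t : ℝ // 0 ≤ t})
  refine le_trans ?_ h
  positivity

lemma expNormZ_bound {l : ℝ} {z : ℝ → ℂ} (hb : ExpBddZ l z) {t : ℝ} (ht : 0 ≤ t) :
    ‖z t‖ ≤ expNormZ l z * Real.exp (-(l * t)) := by
  have h := le_ciSup hb (⟨t, ht⟩ : {t : ℝ // 0 ≤ t})
  have he : (0:ℝ) < Real.exp (l * t) := Real.exp_pos _
  rw [Real.exp_neg, ← le_div_iff₀ he] at *
  simpa [div_eq_mul_inv, expNormZ] using h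

lemma expNormH_nonneg {l : ℝ} {h : ℝ → ℝ → ℝ → ℂ} (hb : ExpBddH l h) : 0 ≤ expNormH l h := by
  have h2 := le_ciSup hb ((⟨0, le_refl 0⟩, 0, 0) : {t : ℝ // 0 ≤ t} × ℝ × ℝ)
  refine le_trans ?_ h2
  positivity

lemma expNormH_bound {l : ℝ} {h : ℝ → ℝ → ℝ → ℂ} (hb : ExpBddH l h) {t : ℝ} (ht : 0 ≤ t)
    (ϑ ω : ℝ) : ‖h t ϑ ω‖ ≤ expNormH l h * Real.exp (-(l * t)) := by
  have h2 := le_ciSup hb ((⟨t, ht⟩, ϑ, ω) : {t : ℝ // 0 ≤ t} × ℝ × ℝ)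
  have he : (0:ℝ) < Real.exp (l * t) := Real.exp_pos _
  rw [Real.exp_neg, ← le_div_iff₀ he] at *
  simpa [div_eq_mul_inv, expNormH] using h2

lemma hasDerivAt_expI (x : ℝ) :
    HasDerivAt (fun y : ℝ => Complex.exp (Complex.I * (y : ℂ)))
      (Complex.I * Complex.exp (Complex.I * (x : ℂ))) x := by
  have h : HasDerivAt (fun w : ℂ => Complex.exp (Complex.I * w))
      (Complex.I * Complex.exp (Complex.I * (x : ℂ))) (x : ℂ) := by
    have h1 : HasDerivAt (fun w : ℂ => Complex.I * w) Complex.I (x : ℂ) := by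
      simpa using (hasDerivAt_id (x:ℂ)).const_mul Complex.I
    simpa [mul_comm] using h1.cexp
  exact h.comp_ofReal

/-- `|e^{ia} - e^{ib}| ≤ |a - b|`. -/
lemma abs_expI_sub (a b : ℝ) :
    ‖Complex.exp (Complex.I * (a : ℂ)) - Complex.exp (Complex.I * (b : ℂ))‖
      ≤ |a - b| := by
  have := (convex_univ : Convex ℝ (Set.univ : Set ℝ)).norm_image_sub_le_of_norm_hasDerivWithin_le
    (f := fun y : ℝ => Complex.exp (Complex.I * (y : ℂ)))
    (f' := fun y : ℝ => Complex.I * Complex.exp (Complex.I * (y : ℂ)))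
    (C := 1)
    (fun x _ => (hasDerivAt_expI x).hasDerivWithinAt)
    (fun x _ => by
      rw [norm_mul]
      simp [Complex.norm_exp]) (Set.mem_univ b) (Set.mem_univ a)
  simpa [Real.norm_eq_abs] using this

/-- `∫_{Ioi a} e^{-bs} ds = e^{-ba}/b` for `b > 0`. -/
lemma integral_exp_neg_mul_Ioi {b : ℝ} (hb : 0 < b) (a : ℝ) :
    (∫ s in Set.Ioi a, Real.exp (-(b * s))) = Real.exp (-(b * a)) / b := by
  have hderiv : ∀ x ∈ Set.Ici a, HasDerivAt (fun s => -Real.exp (-(b * s)) / b)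
      (Real.exp (-(b * x))) x := by
    intro x _
    have h1 : HasDerivAt (fun s : ℝ => -(b * s)) (-b) x := by
      exact (((hasDerivAt_id x).const_mul b).neg).congr_deriv (by simp)
    have := (h1.exp).neg.div_const b
    exact this.congr_deriv (by field_simp)
  have hint : IntegrableOn (fun s : ℝ => Real.exp (-(b * s))) (Set.Ioi a) := by
    simpa [neg_mul] using exp_neg_integrableOn_Ioi a hb
  have htends : Filter.Tendsto (fun s => -Real.exp (-(b * s)) / b) Filter.atTop (nhds 0) := by
    have h2 : Filter.Tendsto (fun s : ℝ => Real.exp (-(b * s))) Filter.atTop (nhds 0) := by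
      have h3 : Filter.Tendsto (fun s : ℝ => -(b * s)) Filter.atTop Filter.atBot := by
        simpa [neg_mul] using Filter.tendsto_id.const_mul_atTop_of_neg
          (neg_neg_iff_pos.2 hb) (f := fun s : ℝ => s)
      exact Real.tendsto_exp_atBot.comp h3
    simpa using (h2.neg.div_const b)
  have := MeasureTheory.integral_Ioi_of_hasDerivAt_of_tendsto' hderiv hint htends
  rw [this]
  field_simp
  ring

/-- The integrand of the asymptotic-characteristic equation. -/
def charFun (F : ℝ → ℝ) (z : ℝ → ℂ) (s : ℝ) : ℝ :=
  (Complex.exp (Complex.I * (F s : ℂ)) * (starRingEnd ℂ) (z s)).im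

lemma abs_charFun_le (F : ℝ → ℝ) (z : ℝ → ℂ) (s : ℝ) :
    |charFun F z s| ≤ ‖z s‖ := by
  refine le_trans (Complex.abs_im_le_norm _) (le_of_eq ?_)
  rw [norm_mul, Complex.norm_conj, Complex.norm_exp]
  simp

lemma abs_charFun_sub_le (F G : ℝ → ℝ) (z z' : ℝ → ℂ) (s : ℝ) :
    |charFun F z s - charFun G z' s| ≤
      |F s - G s| * ‖z s‖ + ‖z s - z' s‖ := by
  set u := Complex.exp (Complex.I * (F s : ℂ))
  set v := Complex.exp (Complex.I * (G s : ℂ))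
  have h1 : charFun F z s - charFun G z' s =
      (u * (starRingEnd ℂ) (z s) - v * (starRingEnd ℂ) (z' s)).im := by
    simp [_root_.charFun, Complex.sub_im, u, v]
  rw [h1]
  refine le_trans (Complex.abs_im_le_norm _) ?_
  have h2 : u * (starRingEnd ℂ) (z s) - v * (starRingEnd ℂ) (z' s) =
      (u - v) * (starRingEnd ℂ) (z s) + v * ((starRingEnd ℂ) (z s) - (starRingEnd ℂ) (z' s)) := by
    ring
  rw [h2]
  refine le_trans (norm_add_le _ _) ?_
  rw [norm_mul, norm_mul, Complex.norm_conj]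
  have hv : ‖v‖ = 1 := by
    simp [v, Complex.norm_exp]
  have hc : ‖(starRingEnd ℂ) (z s) - (starRingEnd ℂ) (z' s)‖
      = ‖z s - z' s‖ := by
    rw [← map_sub, Complex.norm_conj]
  rw [hv, hc, one_mul]
  gcongr
  exact abs_expI_sub _ _

lemma integrableOn_of_expbound {t l c : ℝ} (hl : 0 < l) {g : ℝ → ℝ}
    (hm : AEStronglyMeasurable g (volume.restrict (Set.Ioi t)))
    (hb : ∀ s ∈ Set.Ioi t, |g s| ≤ c * Real.exp (-(l * s))) :
    IntegrableOn g (Set.Ioi t) := by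
  have hint : IntegrableOn (fun s : ℝ => c * Real.exp (-(l * s))) (Set.Ioi t) := by
    have := (exp_neg_integrableOn_Ioi t hl).const_mul c
    simpa [neg_mul, IntegrableOn] using this
  refine Integrable.mono' hint hm ?_
  refine (ae_restrict_iff' measurableSet_Ioi).2 (Filter.Eventually.of_forall ?_)
  intro s hs
  simpa [Real.norm_eq_abs] using hb s hs

lemma measurable_charFun {F : ℝ → ℝ} (hF : Measurable F) {z : ℝ → ℂ} (hz : Measurable z) :
    Measurable (charFun F z) := by
  have h1 : Measurable fun s : ℝ => Complex.exp (Complex.I * ((F s : ℝ) : ℂ)) :=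
    Complex.continuous_exp.measurable.comp
      (measurable_const.mul (Complex.measurable_ofReal.comp hF))
  exact Complex.measurable_im.comp (h1.mul (Complex.continuous_conj.measurable.comp hz))

/-- measurability closure under right limits -/
lemma aesm_Ioi_of_gt {g : ℝ → ℝ} {a : ℝ}
    (h : ∀ b, a < b → AEStronglyMeasurable g (volume.restrict (Set.Ioi b))) :
    AEStronglyMeasurable g (volume.restrict (Set.Ioi a)) := by
  have hset : Set.Ioi a = ⋃ n : ℕ, Set.Ioi (a + ((n : ℝ) + 1)⁻¹) := by
    ext x
    simp only [Set.mem_iUnion, Set.mem_Ioi]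
    constructor
    · intro hx
      obtain ⟨n, hn⟩ := exists_nat_one_div_lt (sub_pos.2 hx)
      exact ⟨n, by rw [one_div] at hn; linarith⟩
    · rintro ⟨n, hn⟩
      have : (0:ℝ) < ((n:ℝ)+1)⁻¹ := by positivity
      linarith
  rw [hset]
  rw [aestronglyMeasurable_iUnion_iff]
  intro n
  refine h _ ?_
  have : (0:ℝ) < ((n:ℝ)+1)⁻¹ := by positivity
  linarith

/-- `Θ` is an asymptotic characteristic for the order parameter `z`, with coupling `μ`:
`Θ(t,ϑ,ω) = ϑ + ωt + μ ∫_t^∞ Im(e^{iΘ(s,ϑ,ω)} conj(z s)) ds` for all `t ≥ 0`. -/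
def IsAsymChar (μ : ℝ) (z : ℝ → ℂ) (Θ : ℝ → ℝ → ℝ → ℝ) : Prop :=
  ∀ t : ℝ, 0 ≤ t → ∀ ϑ ω : ℝ,
    Θ t ϑ ω = ϑ + ω * t + μ * ∫ s in Set.Ioi t,
      (Complex.exp (Complex.I * (Θ s ϑ ω : ℂ)) * (starRingEnd ℂ) (z s)).im

lemma IsAsymChar.integrableOn {l μ : ℝ} (hl : 0 < l) {z : ℝ → ℂ} (hz : Measurable z)
    (hzb : ExpBddZ l z) {Θ : ℝ → ℝ → ℝ → ℝ} (hΘ : IsAsymChar μ z Θ) (ϑ ω : ℝ)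
    {t : ℝ} (ht : 0 ≤ t) :
    IntegrableOn (charFun (fun s => Θ s ϑ ω) z) (Set.Ioi t) := by
  set g := charFun (fun s => Θ s ϑ ω) z with hg
  have hbnd : ∀ a : ℝ, 0 ≤ a → ∀ s ∈ Set.Ioi a, |g s| ≤ expNormZ l z * Real.exp (-(l*s)) :=
    fun a ha s hs => le_trans (abs_charFun_le _ _ _) (expNormZ_bound hzb (le_trans ha (le_of_lt hs)))
  have hintOf : ∀ a : ℝ, 0 ≤ a → AEStronglyMeasurable g (volume.restrict (Set.Ioi a)) →
      IntegrableOn g (Set.Ioi a) := fun a ha hm => integrableOn_of_expbound hl hm (hbnd a ha)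
  have hmono : ∀ a b : ℝ, a ≤ b → IntegrableOn g (Set.Ioi a) → IntegrableOn g (Set.Ioi b) :=
    fun a b hab h => h.mono_set (Set.Ioi_subset_Ioi hab)
  have hzero : ∀ a : ℝ, 0 ≤ a → ¬ IntegrableOn g (Set.Ioi a) → Θ a ϑ ω = ϑ + ω * a := by
    intro a ha hni
    have heq := hΘ a ha ϑ ω
    have h0 : (∫ s in Set.Ioi a,
        (Complex.exp (Complex.I * (Θ s ϑ ω : ℂ)) * (starRingEnd ℂ) (z s)).im) = 0 :=
      integral_undef (by exact hni)
    rw [h0, mul_zero, add_zero] at heq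
    exact heq
  have haff : ∀ (A : Set ℝ), MeasurableSet A → (∀ s ∈ A, Θ s ϑ ω = ϑ + ω * s) →
      AEStronglyMeasurable g (volume.restrict A) := by
    intro A hA hall
    have hm0 : Measurable (charFun (fun s => ϑ + ω * s) z) :=
      measurable_charFun (measurable_const.add (measurable_id.const_mul ω)) hz
    refine hm0.aestronglyMeasurable.congr ?_
    refine (ae_restrict_iff' hA).2 (Filter.Eventually.of_forall fun s hs => ?_)
    simp [hg, _root_.charFun, hall s hs]
  by_contra h0
  by_cases hS : ∃ b, t ≤ b ∧ IntegrableOn g (Set.Ioi b)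
  · obtain ⟨b, htb, hbint⟩ := hS
    set S := {a : ℝ | t ≤ a ∧ IntegrableOn g (Set.Ioi a)} with hSdef
    have hne : S.Nonempty := ⟨b, htb, hbint⟩
    have hbdd : BddBelow S := ⟨t, fun a ha => ha.1⟩
    set τ := sInf S with hτdef
    have hτt : t ≤ τ := le_csInf hne fun a ha => ha.1
    have hτ0 : 0 ≤ τ := le_trans ht hτt
    have hgt : ∀ a, τ < a → IntegrableOn g (Set.Ioi a) := by
      intro a ha
      obtain ⟨c, hcS, hca⟩ := exists_lt_of_csInf_lt hne ha
      exact hmono c a hca.le hcS.2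
    have hmeasτ : AEStronglyMeasurable g (volume.restrict (Set.Ioi τ)) :=
      aesm_Ioi_of_gt fun b hb => (hgt b hb).aestronglyMeasurable
    have hτint : IntegrableOn g (Set.Ioi τ) := hintOf τ hτ0 hmeasτ
    have htτ : t < τ := lt_of_le_of_ne hτt (fun h => h0 (by rw [h]; exact hτint))
    have hnotin : ∀ s, t ≤ s → s < τ → Θ s ϑ ω = ϑ + ω * s := by
      intro s hts hsτ
      refine hzero s (le_trans ht hts) ?_
      intro hsint
      exact absurd (csInf_le hbdd ⟨hts, hsint⟩) (not_le.2 hsτ)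
    have hmeast : AEStronglyMeasurable g (volume.restrict (Set.Ioi t)) := by
      rw [← Set.Ioo_union_Ici_eq_Ioi htτ, aestronglyMeasurable_union_iff]
      constructor
      · exact haff _ measurableSet_Ioo fun s hs => hnotin s hs.1.le hs.2
      · rw [← Measure.restrict_congr_set Ioi_ae_eq_Ici]
        exact hmeasτ
    exact h0 (hintOf t ht hmeast)
  · push_neg at hS
    have hall : ∀ s, 0 ≤ s → Θ s ϑ ω = ϑ + ω * s := by
      intro s hs
      rcases le_total t s with h | h
      · exact hzero s hs (hS s h)
      · exact hzero s hs fun hint => h0 (hmono s t h hint)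
    have hmeast := haff (Set.Ioi t) measurableSet_Ioi fun s hs => hall s (le_trans ht hs.le)
    exact h0 (hintOf t ht hmeast)

lemma key_est {l r : ℝ} (hl : 0 < l) (hr : 0 < r) {t : ℝ} (ht : 0 ≤ t) {F G : ℝ → ℝ}
    {z z' : ℝ → ℂ} {K Kz Kd : ℝ}
    (hA : IntegrableOn (charFun F z) (Set.Ioi t))
    (hB : IntegrableOn (charFun G z') (Set.Ioi t))
    (hzb : ∀ s, 0 ≤ s → ‖z s‖ ≤ Kz * Real.exp (-(l*s)))
    (hdb : ∀ s, 0 ≤ s → ‖z s - z' s‖ ≤ Kd * Real.exp (-(l*s)))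
    (hFG : ∀ s, 0 ≤ s → |F s - G s| ≤ K * Real.exp (-(r*s)))
    (hK : 0 ≤ K) (hKz : 0 ≤ Kz) (hKd : 0 ≤ Kd) :
    |(∫ s in Set.Ioi t, charFun F z s) - ∫ s in Set.Ioi t, charFun G z' s| ≤
      K * Kz / (r+l) * Real.exp (-((r+l)*t)) + Kd / l * Real.exp (-(l*t)) := by
  have h2l : 0 < r + l := by linarith
  have hint1 : IntegrableOn (fun s : ℝ => Real.exp (-((r+l)*s))) (Set.Ioi t) := by
    have h := exp_neg_integrableOn_Ioi t h2l
    have he : (fun x : ℝ => Real.exp (-(r+l) * x)) = fun s : ℝ => Real.exp (-((r+l)*s)) := by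
      funext x; ring_nf
    rwa [he] at h
  have hint2 : IntegrableOn (fun s : ℝ => Real.exp (-(l*s))) (Set.Ioi t) := by
    simpa [neg_mul] using exp_neg_integrableOn_Ioi t hl
  have hintb : IntegrableOn
      (fun s : ℝ => K * Kz * Real.exp (-((r+l)*s)) + Kd * Real.exp (-(l*s))) (Set.Ioi t) :=
    (hint1.const_mul _).add (hint2.const_mul _)
  rw [← integral_sub hA hB]
  have step1 : |∫ s in Set.Ioi t, (charFun F z s - charFun G z' s)| ≤
      ∫ s in Set.Ioi t, |charFun F z s - charFun G z' s| := by
    simpa [Real.norm_eq_abs] using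
      norm_integral_le_integral_norm (μ := volume.restrict (Set.Ioi t))
        (fun s => charFun F z s - charFun G z' s)
  have step2 : (∫ s in Set.Ioi t, |charFun F z s - charFun G z' s|) ≤
      ∫ s in Set.Ioi t, (K * Kz * Real.exp (-((r+l)*s)) + Kd * Real.exp (-(l*s))) := by
    refine setIntegral_mono_on (hA.sub hB).abs hintb measurableSet_Ioi ?_
    intro s hs
    have hs0 : 0 ≤ s := le_trans ht (le_of_lt hs)
    refine le_trans (abs_charFun_sub_le F G z z' s) ?_
    have h1 : |F s - G s| * ‖z s‖ ≤
        (K * Real.exp (-(r*s))) * (Kz * Real.exp (-(l*s))) := by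
      refine mul_le_mul (hFG s hs0) (hzb s hs0) (norm_nonneg _) (by positivity)
    have h2 := hdb s hs0
    have hexp : Real.exp (-(r*s)) * Real.exp (-(l*s)) = Real.exp (-((r+l)*s)) := by
      rw [← Real.exp_add]; ring_nf
    calc |F s - G s| * ‖z s‖ + ‖z s - z' s‖
        ≤ (K * Real.exp (-(r*s))) * (Kz * Real.exp (-(l*s))) + Kd * Real.exp (-(l*s)) := by
          exact add_le_add h1 h2
      _ = K * Kz * Real.exp (-((r+l)*s)) + Kd * Real.exp (-(l*s)) := by
          rw [← hexp]; ring
  have step3 : (∫ s in Set.Ioi t, (K * Kz * Real.exp (-((r+l)*s)) + Kd * Real.exp (-(l*s)))) =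
      K * Kz / (r+l) * Real.exp (-((r+l)*t)) + Kd / l * Real.exp (-(l*t)) := by
    rw [integral_add (hint1.const_mul _) (hint2.const_mul _),
      MeasureTheory.integral_const_mul, MeasureTheory.integral_const_mul,
      integral_exp_neg_mul_Ioi h2l, integral_exp_neg_mul_Ioi hl]
    ring
  calc |∫ s in Set.Ioi t, (charFun F z s - charFun G z' s)|
      ≤ ∫ s in Set.Ioi t, |charFun F z s - charFun G z' s| := step1
    _ ≤ _ := step2
    _ = _ := step3

/-- Picard iterates for the characteristics fixed-point equation. -/
def picard (μ : ℝ) (z : ℝ → ℂ) : ℕ → ℝ → ℝ → ℝ → ℝ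
  | 0 => fun t ϑ ω => ϑ + ω * t
  | n+1 => fun t ϑ ω => ϑ + ω * t +
      μ * ∫ s in Set.Ioi t, charFun (fun u => picard μ z n u ϑ ω) z s

lemma picard_measurable (μ : ℝ) {z : ℝ → ℂ} (hz : Measurable z) (n : ℕ) :
    Measurable (fun p : ℝ × ℝ × ℝ => picard μ z n p.1 p.2.1 p.2.2) := by
  induction n with
  | zero =>
    simp only [picard]
    exact measurable_snd.fst.add (measurable_snd.snd.mul measurable_fst)
  | succ n ih =>
    simp only [picard]
    have hsl : Measurable fun q : (ℝ × ℝ × ℝ) × ℝ => picard μ z n q.2 q.1.2.1 q.1.2.2 :=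
      ih.comp (measurable_snd.prodMk
        (measurable_fst.snd.fst.prodMk measurable_fst.snd.snd))
    have hGm : Measurable fun q : (ℝ × ℝ × ℝ) × ℝ =>
        (Complex.exp (Complex.I * ((picard μ z n q.2 q.1.2.1 q.1.2.2 : ℝ) : ℂ)) *
          (starRingEnd ℂ) (z q.2)).im := by
      refine Complex.measurable_im.comp (Measurable.mul ?_ ?_)
      · exact Complex.continuous_exp.measurable.comp
          (measurable_const.mul (Complex.measurable_ofReal.comp hsl))
      · exact (Complex.continuous_conj.measurable.comp hz).comp measurable_snd
    have hH : Measurable fun q : (ℝ × ℝ × ℝ) × ℝ =>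
        if q.1.1 < q.2 then
          charFun (fun u => picard μ z n u q.1.2.1 q.1.2.2) z q.2 else 0 := by
      refine Measurable.ite ?_ ?_ measurable_const
      · exact measurableSet_lt measurable_fst.fst measurable_snd
      · exact hGm
    have hInt : Measurable fun p : ℝ × ℝ × ℝ =>
        ∫ s in Set.Ioi p.1, charFun (fun u => picard μ z n u p.2.1 p.2.2) z s := by
      have heq : (fun p : ℝ × ℝ × ℝ =>
          ∫ s in Set.Ioi p.1, charFun (fun u => picard μ z n u p.2.1 p.2.2) z s) =
          fun p : ℝ × ℝ × ℝ => ∫ s, (if p.1 < s then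
            charFun (fun u => picard μ z n u p.2.1 p.2.2) z s else 0) := by
        funext p
        rw [← MeasureTheory.integral_indicator measurableSet_Ioi]
        simp [Set.indicator_apply, Set.mem_Ioi]
      rw [heq]
      exact (hH.stronglyMeasurable.integral_prod_right').measurable
    exact (measurable_snd.fst.add (measurable_snd.snd.mul measurable_fst)).add
      (hInt.const_mul μ)

lemma picard_conv {l μ : ℝ} (hl : 0 < l) (hμ : 0 < μ) {z : ℝ → ℂ} (hz : Measurable z)
    (hzb : ExpBddZ l z) {Θ : ℝ → ℝ → ℝ → ℝ} (hΘ : IsAsymChar μ z Θ)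
    (hΘb : ExpBddH l (fun t ϑ ω => ((Θ t ϑ ω - ϑ - ω * t : ℝ) : ℂ))) (n : ℕ) :
    ∀ t, 0 ≤ t → ∀ ϑ ω, |picard μ z n t ϑ ω - Θ t ϑ ω| ≤
      expNormH l (fun t ϑ ω => ((Θ t ϑ ω - ϑ - ω * t : ℝ) : ℂ)) *
        ((μ * expNormZ l z / l) ^ n / n.factorial) * Real.exp (-(((n:ℝ)+1) * l * t)) := by
  set C := expNormH l (fun t ϑ ω => ((Θ t ϑ ω - ϑ - ω * t : ℝ) : ℂ)) with hCdef
  set Nz := expNormZ l z with hNzdef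
  set a := μ * Nz / l with hadef
  have hC : 0 ≤ C := expNormH_nonneg hΘb
  have hNz : 0 ≤ Nz := expNormZ_nonneg hzb
  have ha : 0 ≤ a := by positivity
  induction n with
  | zero =>
    intro t ht ϑ ω
    have := expNormH_bound hΘb ht ϑ ω
    rw [Complex.norm_real, Real.norm_eq_abs] at this
    simp only [picard, pow_zero, Nat.factorial_zero, Nat.cast_one, Nat.cast_zero]
    norm_num
    calc |ϑ + ω * t - Θ t ϑ ω| = |Θ t ϑ ω - ϑ - ω * t| := by
          rw [abs_sub_comm]; ring_nf
      _ ≤ C * Real.exp (-(l * t)) := this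
  | succ n ih =>
    intro t ht ϑ ω
    have hFn_meas : Measurable (fun u => picard μ z n u ϑ ω) := by
      have h2 : Measurable fun u : ℝ => (u, (ϑ, ω)) := measurable_id.prodMk measurable_const
      exact (picard_measurable μ hz n).comp h2
    have hA : IntegrableOn (charFun (fun u => picard μ z n u ϑ ω) z) (Set.Ioi t) := by
      refine integrableOn_of_expbound (c := Nz) hl
        (measurable_charFun hFn_meas hz).aestronglyMeasurable (fun s hs => ?_)
      exact le_trans (abs_charFun_le _ _ _) (expNormZ_bound hzb (le_trans ht (le_of_lt hs)))
    have hB : IntegrableOn (charFun (fun u => Θ u ϑ ω) z) (Set.Ioi t) :=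
      hΘ.integrableOn hl hz hzb ϑ ω ht
    have hΘeq : Θ t ϑ ω = ϑ + ω * t +
        μ * ∫ s in Set.Ioi t, charFun (fun u => Θ u ϑ ω) z s := hΘ t ht ϑ ω
    have heq : picard μ z (n+1) t ϑ ω - Θ t ϑ ω =
        μ * ((∫ s in Set.Ioi t, charFun (fun u => picard μ z n u ϑ ω) z s) -
          ∫ s in Set.Ioi t, charFun (fun u => Θ u ϑ ω) z s) := by
      rw [hΘeq]; simp only [picard]; ring
    have hrl : (0:ℝ) < ((n:ℝ)+1) * l := by positivity
    have hK0 : (0:ℝ) ≤ C * (a ^ n / n.factorial) := by positivity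
    have hkey := key_est (r := ((n:ℝ)+1) * l) hl hrl ht
      (F := fun u => picard μ z n u ϑ ω) (G := fun u => Θ u ϑ ω)
      (z := z) (z' := z) (K := C * (a ^ n / n.factorial)) (Kz := Nz) (Kd := 0) hA hB
      (fun s hs => expNormZ_bound hzb hs)
      (fun s _ => by simp)
      (fun s hs => ih s hs ϑ ω)
      hK0 hNz le_rfl
    rw [heq, abs_mul, abs_of_pos hμ]
    calc μ * |(∫ s in Set.Ioi t, charFun (fun u => picard μ z n u ϑ ω) z s) -
          ∫ s in Set.Ioi t, charFun (fun u => Θ u ϑ ω) z s|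
        ≤ μ * ((C * (a ^ n / n.factorial)) * Nz / (((n:ℝ)+1) * l + l) *
            Real.exp (-((((n:ℝ)+1) * l + l)*t)) + 0 / l * Real.exp (-(l*t))) :=
          mul_le_mul_of_nonneg_left hkey (le_of_lt hμ)
      _ = μ * ((C * (a ^ n / n.factorial)) * Nz / (((n:ℝ)+2) * l)) *
            Real.exp (-(((n:ℝ)+2) * l * t)) := by
          rw [zero_div, zero_mul, add_zero]
          have h3 : ((n:ℝ)+1) * l + l = ((n:ℝ)+2) * l := by ring
          rw [h3]
          ring
      _ ≤ C * (a ^ (n+1) / (n+1).factorial) * Real.exp (-(((n:ℝ)+2) * l * t)) := by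
          refine mul_le_mul_of_nonneg_right ?_ (Real.exp_pos _).le
          rw [Nat.factorial_succ, hadef, pow_succ]
          have hfact : (0:ℝ) < (n.factorial : ℝ) := by positivity
          have hl' : l ≠ 0 := ne_of_gt hl
          have hF' : (n.factorial : ℝ) ≠ 0 := ne_of_gt hfact
          have hn2 : ((n:ℝ)+2) ≠ 0 := by positivity
          have hn1 : ((n:ℝ)+1) ≠ 0 := by positivity
          push_cast
          have e1 : μ * (C * ((μ * Nz / l) ^ n / (n.factorial:ℝ)) * Nz / (((n:ℝ)+2)*l)) =
              C * (μ * Nz / l) ^ n * μ * Nz / (l * (n.factorial:ℝ)) * (((n:ℝ)+2))⁻¹ := by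
            field_simp
          have e2 : C * ((μ * Nz / l) ^ n * (μ * Nz / l) / (((n:ℝ)+1) * (n.factorial:ℝ))) =
              C * (μ * Nz / l) ^ n * μ * Nz / (l * (n.factorial:ℝ)) * (((n:ℝ)+1))⁻¹ := by
            field_simp
          rw [e1, e2]
          have h9 : (((n:ℝ)+2))⁻¹ ≤ (((n:ℝ)+1))⁻¹ := by
            rw [← one_div, ← one_div]
            exact one_div_le_one_div_of_le (by positivity) (by linarith)
          exact mul_le_mul_of_nonneg_left h9 (by positivity)
      _ = C * (a ^ (n+1) / (n+1).factorial) * Real.exp (-((((n+1:ℕ):ℝ)+1) * l * t)) := by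
          push_cast
          ring_nf

/-- Pointwise convergence of the Picard iterates to the asymptotic characteristic. -/
lemma picard_tendsto {l μ : ℝ} (hl : 0 < l) (hμ : 0 < μ) {z : ℝ → ℂ} (hz : Measurable z)
    (hzb : ExpBddZ l z) {Θ : ℝ → ℝ → ℝ → ℝ} (hΘ : IsAsymChar μ z Θ)
    (hΘb : ExpBddH l (fun t ϑ ω => ((Θ t ϑ ω - ϑ - ω * t : ℝ) : ℂ)))
    {t : ℝ} (ht : 0 ≤ t) (ϑ ω : ℝ) :
    Filter.Tendsto (fun n => picard μ z n t ϑ ω) Filter.atTop (nhds (Θ t ϑ ω)) := by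
  set C := expNormH l (fun t ϑ ω => ((Θ t ϑ ω - ϑ - ω * t : ℝ) : ℂ)) with hCdef
  set a := μ * expNormZ l z / l with hadef
  have hC : 0 ≤ C := expNormH_nonneg hΘb
  have ha : 0 ≤ a := div_nonneg (mul_nonneg hμ.le (expNormZ_nonneg hzb)) hl.le
  have hconv : Filter.Tendsto (fun n : ℕ => C * (a ^ n / n.factorial)) Filter.atTop (nhds 0) := by
    have h1 := FloorSemiring.tendsto_pow_div_factorial_atTop (K := ℝ) a
    have h2 := h1.const_mul C
    simpa using h2
  rw [tendsto_iff_dist_tendsto_zero]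
  refine squeeze_zero (fun n => dist_nonneg) (fun n => ?_) hconv
  rw [Real.dist_eq]
  calc |picard μ z n t ϑ ω - Θ t ϑ ω|
      ≤ C * (a ^ n / n.factorial) * Real.exp (-(((n:ℝ)+1) * l * t)) :=
        picard_conv hl hμ hz hzb hΘ hΘb n t ht ϑ ω
    _ ≤ C * (a ^ n / n.factorial) * 1 := by
        refine mul_le_mul_of_nonneg_left ?_
          (mul_nonneg hC (div_nonneg (pow_nonneg ha n) (by positivity)))
        refine Real.exp_le_one_iff.2 ?_
        have : (0:ℝ) ≤ ((n:ℝ)+1) * l * t :=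
          mul_nonneg (mul_nonneg (by positivity) hl.le) ht
        linarith
    _ = C * (a ^ n / n.factorial) := by ring

/-- For `t ≥ 0` the slice `(ϑ, ω) ↦ Θ t ϑ ω` is measurable. -/
lemma theta_slice_measurable {l μ : ℝ} (hl : 0 < l) (hμ : 0 < μ) {z : ℝ → ℂ}
    (hz : Measurable z) (hzb : ExpBddZ l z) {Θ : ℝ → ℝ → ℝ → ℝ} (hΘ : IsAsymChar μ z Θ)
    (hΘb : ExpBddH l (fun t ϑ ω => ((Θ t ϑ ω - ϑ - ω * t : ℝ) : ℂ)))
    {t : ℝ} (ht : 0 ≤ t) :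
    Measurable (fun p : ℝ × ℝ => Θ t p.1 p.2) := by
  refine measurable_of_tendsto_metrizable
    (f := fun n (p : ℝ × ℝ) => picard μ z n t p.1 p.2) (fun n => ?_) ?_
  · have h2 : Measurable fun p : ℝ × ℝ => (t, p) := measurable_const.prodMk measurable_id
    exact (picard_measurable μ hz n).comp h2
  · rw [tendsto_pi_nhds]
    intro p
    exact picard_tendsto hl hμ hz hzb hΘ hΘb ht p.1 p.2

/-- The reference measure on the cylinder `[0, 2π) × ℝ`. -/
def cylMeasure : Measure (ℝ × ℝ) :=
  (volume.restrict (Set.Ico 0 (2 * Real.pi))).prod volume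

/-- `f` is a probability density on the cylinder: nonnegative, `2π`-periodic in the
first variable, with total integral one over `[0, 2π) × ℝ`. -/
structure IsCylDensity (f : ℝ → ℝ → ℝ) : Prop where
  nonneg : ∀ ϑ ω : ℝ, 0 ≤ f ϑ ω
  periodic : ∀ ϑ ω : ℝ, f (ϑ + 2 * Real.pi) ω = f ϑ ω
  integrable : Integrable (fun p : ℝ × ℝ => f p.1 p.2) cylMeasure
  integral_one : (∫ p : ℝ × ℝ, f p.1 p.2 ∂cylMeasure) = 1

/-- The order parameter `w(t) = ∫_{[0,2π)×ℝ} e^{iΘ(t,ϑ,ω)} f(ϑ,ω) dϑ dω`. -/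
def orderParam (f : ℝ → ℝ → ℝ) (Θ : ℝ → ℝ → ℝ → ℝ) (t : ℝ) : ℂ :=
  ∫ p : ℝ × ℝ, Complex.exp (Complex.I * (Θ t p.1 p.2 : ℂ)) * (f p.1 p.2 : ℂ) ∂cylMeasure

/-- The iteration map is a `1/2`-contraction when `2μ ≤ λ - μ‖z‖_λ`. -/
theorem orderParam_half_contraction_exp
    (l μ : ℝ) (hl : 0 < l) (hμ : 0 < μ) (z z' : ℝ → ℂ)
    (hz : Measurable z) (hz' : Measurable z')
    (hzb : ExpBddZ l z) (hz'b : ExpBddZ l z')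
    (hsmall : 2 * μ ≤ l - μ * expNormZ l z)
    (Θ Θ' : ℝ → ℝ → ℝ → ℝ) (hΘ : IsAsymChar μ z Θ) (hΘ' : IsAsymChar μ z' Θ')
    (hΘb : ExpBddH l (fun t ϑ ω => ((Θ t ϑ ω - ϑ - ω * t : ℝ) : ℂ)))
    (hΘ'b : ExpBddH l (fun t ϑ ω => ((Θ' t ϑ ω - ϑ - ω * t : ℝ) : ℂ)))
    (f : ℝ → ℝ → ℝ) (hf : IsCylDensity f) :
    expNormZ l (fun t => orderParam f Θ t - orderParam f Θ' t) ≤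
      (1 / 2) * expNormZ l (fun t => z t - z' t) := by
  set Nz := expNormZ l z with hNzdef
  set Nd := expNormZ l (fun t => z t - z' t) with hNddef
  have hNz0 : 0 ≤ Nz := expNormZ_nonneg hzb
  -- the difference `z - z'` has finite weighted norm
  have hdbdd : ExpBddZ l (fun t => z t - z' t) := by
    refine ⟨expNormZ l z + expNormZ l z', ?_⟩
    rintro x ⟨⟨t, ht⟩, rfl⟩
    have h1 := le_ciSup hzb (⟨t, ht⟩ : {t : ℝ // 0 ≤ t})
    have h2 := le_ciSup hz'b (⟨t, ht⟩ : {t : ℝ // 0 ≤ t})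
    have h3 : ‖z t - z' t‖ ≤ ‖z t‖ + ‖z' t‖ := by
      simpa using norm_sub_le (z t) (z' t)
    calc ‖z t - z' t‖ * Real.exp (l * t)
        ≤ (‖z t‖ + ‖z' t‖) * Real.exp (l * t) :=
          mul_le_mul_of_nonneg_right h3 (Real.exp_pos _).le
      _ = ‖z t‖ * Real.exp (l * t) + ‖z' t‖ * Real.exp (l * t) := by
          ring
      _ ≤ expNormZ l z + expNormZ l z' := add_le_add h1 h2
  have hNd0 : 0 ≤ Nd := expNormZ_nonneg hdbdd
  have hdb : ∀ s, 0 ≤ s → ‖z s - z' s‖ ≤ Nd * Real.exp (-(l*s)) := by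
    intro s hs
    have := expNormZ_bound hdbdd hs
    simpa using this
  -- the difference `Θ - Θ'` has finite weighted norm
  have hΔbdd : ExpBddH l (fun t ϑ ω => ((Θ t ϑ ω - Θ' t ϑ ω : ℝ) : ℂ)) := by
    refine ⟨expNormH l (fun t ϑ ω => ((Θ t ϑ ω - ϑ - ω * t : ℝ) : ℂ)) +
      expNormH l (fun t ϑ ω => ((Θ' t ϑ ω - ϑ - ω * t : ℝ) : ℂ)), ?_⟩
    rintro x ⟨⟨⟨t, ht⟩, ϑ, ω⟩, rfl⟩
    simp only [Complex.norm_real, Real.norm_eq_abs]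
    have h1 := expNormH_bound hΘb ht ϑ ω
    have h2 := expNormH_bound hΘ'b ht ϑ ω
    rw [Complex.norm_real, Real.norm_eq_abs] at h1 h2
    have h3 : |Θ t ϑ ω - Θ' t ϑ ω| ≤ |Θ t ϑ ω - ϑ - ω * t| + |Θ' t ϑ ω - ϑ - ω * t| := by
      have h4 := abs_sub_le (Θ t ϑ ω) (ϑ + ω * t) (Θ' t ϑ ω)
      have h5 : Θ t ϑ ω - (ϑ + ω * t) = Θ t ϑ ω - ϑ - ω * t := by ring
      have h6 : |ϑ + ω * t - Θ' t ϑ ω| = |Θ' t ϑ ω - ϑ - ω * t| := by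
        rw [abs_sub_comm]; ring_nf
      rw [h5, h6] at h4
      exact h4
    have hEE : Real.exp (-(l*t)) * Real.exp (l*t) = 1 := by
      rw [← Real.exp_add]; simp
    calc |Θ t ϑ ω - Θ' t ϑ ω| * Real.exp (l * t)
        ≤ (|Θ t ϑ ω - ϑ - ω * t| + |Θ' t ϑ ω - ϑ - ω * t|) * Real.exp (l * t) :=
          mul_le_mul_of_nonneg_right h3 (Real.exp_pos _).le
      _ ≤ ((expNormH l (fun t ϑ ω => ((Θ t ϑ ω - ϑ - ω * t : ℝ) : ℂ)) +
            expNormH l (fun t ϑ ω => ((Θ' t ϑ ω - ϑ - ω * t : ℝ) : ℂ))) * Real.exp (-(l*t))) *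
            Real.exp (l * t) := by
          refine mul_le_mul_of_nonneg_right ?_ (Real.exp_pos _).le
          calc |Θ t ϑ ω - ϑ - ω * t| + |Θ' t ϑ ω - ϑ - ω * t|
              ≤ expNormH l (fun t ϑ ω => ((Θ t ϑ ω - ϑ - ω * t : ℝ) : ℂ)) * Real.exp (-(l*t)) +
                expNormH l (fun t ϑ ω => ((Θ' t ϑ ω - ϑ - ω * t : ℝ) : ℂ)) * Real.exp (-(l*t)) :=
                add_le_add h1 h2
            _ = _ := by ring
      _ = _ := by rw [mul_assoc, hEE, mul_one]
  set Δ := expNormH l (fun t ϑ ω => ((Θ t ϑ ω - Θ' t ϑ ω : ℝ) : ℂ)) with hΔdef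
  have hΔ0 : 0 ≤ Δ := expNormH_nonneg hΔbdd
  have hΔb : ∀ s, 0 ≤ s → ∀ ϑ ω, |Θ s ϑ ω - Θ' s ϑ ω| ≤ Δ * Real.exp (-(l*s)) := by
    intro s hs ϑ ω
    have h := expNormH_bound hΔbdd hs ϑ ω
    simp only [Complex.norm_real, Real.norm_eq_abs] at h
    exact h
  -- the contraction estimate for Δ
  have hΔest : Δ ≤ μ * Δ * Nz / (2*l) + μ * Nd / l := by
    refine ciSup_le ?_
    rintro ⟨⟨t, ht⟩, ϑ, ω⟩
    simp only [Complex.norm_real, Real.norm_eq_abs]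
    have hA : IntegrableOn (charFun (fun u => Θ u ϑ ω) z) (Set.Ioi t) :=
      hΘ.integrableOn hl hz hzb ϑ ω ht
    have hB : IntegrableOn (charFun (fun u => Θ' u ϑ ω) z') (Set.Ioi t) :=
      hΘ'.integrableOn hl hz' hz'b ϑ ω ht
    have e1 : Θ t ϑ ω = ϑ + ω * t +
        μ * ∫ s in Set.Ioi t, charFun (fun u => Θ u ϑ ω) z s := hΘ t ht ϑ ω
    have e2 : Θ' t ϑ ω = ϑ + ω * t +
        μ * ∫ s in Set.Ioi t, charFun (fun u => Θ' u ϑ ω) z' s := hΘ' t ht ϑ ω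
    have heq : Θ t ϑ ω - Θ' t ϑ ω =
        μ * ((∫ s in Set.Ioi t, charFun (fun u => Θ u ϑ ω) z s) -
          ∫ s in Set.Ioi t, charFun (fun u => Θ' u ϑ ω) z' s) := by
      rw [e1, e2]; ring
    have hkey := key_est (r := l) hl hl ht hA hB
      (K := Δ) (Kz := Nz) (Kd := Nd)
      (fun s hs => expNormZ_bound hzb hs)
      (fun s hs => hdb s hs)
      (fun s hs => hΔb s hs ϑ ω)
      hΔ0 hNz0 hNd0
    have h5 : |Θ t ϑ ω - Θ' t ϑ ω| ≤
        μ * (Δ * Nz / (l+l) * Real.exp (-((l+l)*t)) + Nd / l * Real.exp (-(l*t))) := by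
      rw [heq, abs_mul, abs_of_pos hμ]
      exact mul_le_mul_of_nonneg_left hkey hμ.le
    have he1 : Real.exp (-((l+l)*t)) * Real.exp (l*t) = Real.exp (-(l*t)) := by
      rw [← Real.exp_add]; congr 1; ring
    have he2 : Real.exp (-(l*t)) * Real.exp (l*t) = 1 := by
      rw [← Real.exp_add]; simp
    have he3 : Real.exp (-(l*t)) ≤ 1 := by
      refine Real.exp_le_one_iff.2 ?_
      have := mul_nonneg hl.le ht
      linarith
    have h7 : 0 ≤ μ * Δ * Nz / (2*l) :=
      div_nonneg (mul_nonneg (mul_nonneg hμ.le hΔ0) hNz0) (by linarith)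
    calc |Θ t ϑ ω - Θ' t ϑ ω| * Real.exp (l * t)
        ≤ (μ * (Δ * Nz / (l+l) * Real.exp (-((l+l)*t)) + Nd / l * Real.exp (-(l*t)))) *
            Real.exp (l * t) := mul_le_mul_of_nonneg_right h5 (Real.exp_pos _).le
      _ = μ * Δ * Nz / (2*l) * (Real.exp (-((l+l)*t)) * Real.exp (l*t)) +
            μ * Nd / l * (Real.exp (-(l*t)) * Real.exp (l*t)) := by ring
      _ = μ * Δ * Nz / (2*l) * Real.exp (-(l*t)) + μ * Nd / l := by
          rw [he1, he2, mul_one]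
      _ ≤ μ * Δ * Nz / (2*l) * 1 + μ * Nd / l := by
          exact add_le_add_left (mul_le_mul_of_nonneg_left he3 h7) _
      _ = μ * Δ * Nz / (2*l) + μ * Nd / l := by ring
  -- algebra: Δ ≤ Nd / 2
  have hhalf : Δ ≤ (1/2) * Nd := by
    have h2l : (0:ℝ) < 2*l := by linarith
    have h1 : Δ * (2*l) ≤ (μ * Δ * Nz / (2*l) + μ * Nd / l) * (2*l) :=
      mul_le_mul_of_nonneg_right hΔest h2l.le
    have e : (μ * Δ * Nz / (2*l) + μ * Nd / l) * (2*l) = μ * Δ * Nz + 2 * (μ * Nd) := by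
      field_simp
    rw [e] at h1
    nlinarith [mul_le_mul_of_nonneg_right hsmall hΔ0, mul_nonneg hμ.le hNd0,
      mul_nonneg (mul_nonneg hμ.le hΔ0) hNz0, mul_pos hμ hl]
  -- final estimate
  rw [expNormZ]
  refine ciSup_le ?_
  rintro ⟨t, ht⟩
  simp only
  set φ : ℝ × ℝ → ℂ :=
    fun p => Complex.exp (Complex.I * (Θ t p.1 p.2 : ℂ)) * (f p.1 p.2 : ℂ) with hφdef
  set φ' : ℝ × ℝ → ℂ :=
    fun p => Complex.exp (Complex.I * (Θ' t p.1 p.2 : ℂ)) * (f p.1 p.2 : ℂ) with hφ'def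
  have hmΘ : Measurable (fun p : ℝ × ℝ => Θ t p.1 p.2) :=
    theta_slice_measurable hl hμ hz hzb hΘ hΘb ht
  have hmΘ' : Measurable (fun p : ℝ × ℝ => Θ' t p.1 p.2) :=
    theta_slice_measurable hl hμ hz' hz'b hΘ' hΘ'b ht
  have hfae : AEStronglyMeasurable (fun p : ℝ × ℝ => (f p.1 p.2 : ℂ)) cylMeasure :=
    Complex.continuous_ofReal.comp_aestronglyMeasurable hf.integrable.aestronglyMeasurable
  have hφm : AEStronglyMeasurable φ cylMeasure := by
    refine AEStronglyMeasurable.mul ?_ hfae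
    exact (Complex.continuous_exp.measurable.comp
      (measurable_const.mul (Complex.measurable_ofReal.comp hmΘ))).aestronglyMeasurable
  have hφ'm : AEStronglyMeasurable φ' cylMeasure := by
    refine AEStronglyMeasurable.mul ?_ hfae
    exact (Complex.continuous_exp.measurable.comp
      (measurable_const.mul (Complex.measurable_ofReal.comp hmΘ'))).aestronglyMeasurable
  have habs : ∀ (G : ℝ → ℝ → ℝ) (p : ℝ × ℝ),
      ‖Complex.exp (Complex.I * (G p.1 p.2 : ℂ)) * (f p.1 p.2 : ℂ)‖ = f p.1 p.2 := by
    intro G p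
    rw [norm_mul, Complex.norm_exp,
      Complex.norm_real]
    simp [abs_of_nonneg (hf.nonneg p.1 p.2)]
  have hφint : Integrable φ cylMeasure := by
    refine Integrable.mono' hf.integrable hφm ?_
    exact Filter.Eventually.of_forall fun p => le_of_eq (habs (fun a b => Θ t a b) p)
  have hφ'int : Integrable φ' cylMeasure := by
    refine Integrable.mono' hf.integrable hφ'm ?_
    exact Filter.Eventually.of_forall fun p => le_of_eq (habs (fun a b => Θ' t a b) p)
  have hw : orderParam f Θ t = ∫ p, φ p ∂cylMeasure := rfl
  have hw' : orderParam f Θ' t = ∫ p, φ' p ∂cylMeasure := rfl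
  have hsub : orderParam f Θ t - orderParam f Θ' t = ∫ p, (φ p - φ' p) ∂cylMeasure := by
    rw [hw, hw', ← integral_sub hφint hφ'int]
  have hb2 : ‖∫ p, (φ p - φ' p) ∂cylMeasure‖ ≤ Δ * Real.exp (-(l*t)) := by
    refine le_trans (norm_integral_le_integral_norm _) ?_
    have hptw : ∀ p : ℝ × ℝ, ‖φ p - φ' p‖ ≤ (Δ * Real.exp (-(l*t))) * f p.1 p.2 := by
      intro p
      have hfac : φ p - φ' p =
          (Complex.exp (Complex.I * (Θ t p.1 p.2 : ℂ)) -
            Complex.exp (Complex.I * (Θ' t p.1 p.2 : ℂ))) * (f p.1 p.2 : ℂ) := by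
        rw [hφdef, hφ'def]; ring
      rw [hfac, norm_mul, Complex.norm_real, Real.norm_eq_abs,
        abs_of_nonneg (hf.nonneg p.1 p.2)]
      refine mul_le_mul ?_ le_rfl (hf.nonneg p.1 p.2) (by positivity)
      exact le_trans (abs_expI_sub _ _) (hΔb t ht p.1 p.2)
    calc (∫ p, ‖φ p - φ' p‖ ∂cylMeasure)
        ≤ ∫ p, (Δ * Real.exp (-(l*t))) * f p.1 p.2 ∂cylMeasure :=
          integral_mono (hφint.sub hφ'int).norm (hf.integrable.const_mul _) hptw
      _ = (Δ * Real.exp (-(l*t))) * ∫ p, f p.1 p.2 ∂cylMeasure :=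
          MeasureTheory.integral_const_mul _ _
      _ = Δ * Real.exp (-(l*t)) := by rw [hf.integral_one, mul_one]
  have he2 : Real.exp (-(l*t)) * Real.exp (l*t) = 1 := by
    rw [← Real.exp_add]; simp
  calc ‖orderParam f Θ t - orderParam f Θ' t‖ * Real.exp (l * t)
      ≤ (Δ * Real.exp (-(l*t))) * Real.exp (l * t) := by
        refine mul_le_mul_of_nonneg_right ?_ (Real.exp_pos _).le
        rw [hsub]
        exact hb2
    _ = Δ * (Real.exp (-(l*t)) * Real.exp (l*t)) := by ring
    _ = Δ := by rw [he2, mul_one]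
    _ ≤ (1/2) * Nd := hhalf
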